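/- Define, for a positive integer n, the density r⁽ⁿ⁾ on [0,1] by r⁽ⁿ⁾(x) = 1 on [0, 1−1/n), 1/2 on [1−1/n, 1−1/(2n)), and 3/2 on [1−1/(2n), 1]. Then for any interval I ⊆ [0,1] with ∫_I r⁽ⁿ⁾ ≥ 1/n, the Lebesgue measure of I is at least 1/n. -/
import Mathlib

open MeasureTheory Set intervalIntegral

/-- The density `r⁽ⁿ⁾`: `1` on `[0, 1−1/n)`, `1/2` on `[1−1/n, 1−1/(2n))`, `3/2` on `[1−1/(2n), 1]`. -/
noncomputable def rdens (n : ℕ) : ℝ → ℝ := fun x =>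
  if x < 1 - 1 / n then 1 else if x < 1 - 1 / (2 * n) then 1/2 else 3/2

lemma rdens_measurable (n : ℕ) : Measurable (rdens n) := by
  unfold rdens
  exact Measurable.ite (measurableSet_lt measurable_id measurable_const) measurable_const
    (Measurable.ite (measurableSet_lt measurable_id measurable_const) measurable_const
      measurable_const)

lemma rdens_intervalIntegrable (n : ℕ) (u v : ℝ) :
    IntervalIntegrable (rdens n) volume u v := by
  apply IntervalIntegrable.mono_fun (_root_.intervalIntegrable_const (c := (3/2:ℝ)))
  · exact (rdens_measurable n).aestronglyMeasurable
  · filter_upwards with x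
    unfold rdens
    simp only [Real.norm_eq_abs]
    split_ifs <;>
      rw [abs_of_nonneg (by norm_num : (0:ℝ) ≤ 3/2)] <;> norm_num [abs_of_nonneg]

lemma integral_rdens_const (n : ℕ) (u v C : ℝ) (huv : u ≤ v)
    (h : ∀ x, u < x → x < v → rdens n x = C) :
    ∫ x in u..v, rdens n x = C * (v - u) := by
  have hv : ∀ᵐ x : ℝ, x ≠ v := by
    rw [ae_iff]
    simpa [Set.setOf_eq_eq_singleton] using Real.volume_singleton (x := v)
  have heq : ∫ x in u..v, rdens n x = ∫ x in u..v, C := by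
    apply intervalIntegral.integral_congr_ae
    filter_upwards [hv] with x hx hmem
    rw [Set.uIoc_of_le huv] at hmem
    exact h x hmem.1 (lt_of_le_of_ne hmem.2 hx)
  rw [heq, intervalIntegral.integral_const, smul_eq_mul, mul_comm]

/-- Any interval `I = [a,b] ⊆ [0,1]` with `∫_I r⁽ⁿ⁾ ≥ 1/n` has length at least `1/n`. -/
theorem rdens_proportional_implies_length (n : ℕ) (hn : 1 ≤ n) (a b : ℝ)
    (ha : 0 ≤ a) (hab : a ≤ b) (hb : b ≤ 1)
    (hval : (∫ x in a..b, rdens n x) ≥ 1 / n) :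
    b - a ≥ 1 / n := by
  have hn1 : (1:ℝ) ≤ (n:ℝ) := by exact_mod_cast hn
  have hnpos : (0:ℝ) < n := by linarith
  set c : ℝ := 1 - 1 / n with hc
  set m : ℝ := 1 - 1 / (2 * n) with hm
  have h2n : (2:ℝ) * (1 / (2 * n)) = 1 / n := by field_simp
  have hNpos : (0:ℝ) < 1 / n := by positivity
  have hcm : c ≤ m := by rw [hc, hm]; nlinarith [h2n, hNpos]
  have hm1 : m ≤ 1 := by rw [hm]; nlinarith [h2n, hNpos]
  set p := max a (min b c) with hp
  set q := max a (min b m) with hq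
  have hap : a ≤ p := le_max_left _ _
  have hpq : p ≤ q := max_le_max le_rfl (min_le_min le_rfl hcm)
  have hqb : q ≤ b := max_le hab (min_le_left _ _)
  have hpb : p ≤ b := hpq.trans hqb
  have split : (∫ x in a..b, rdens n x) =
      (∫ x in a..p, rdens n x) + (∫ x in p..q, rdens n x) + (∫ x in q..b, rdens n x) := by
    rw [intervalIntegral.integral_add_adjacent_intervals (rdens_intervalIntegrable n a p)
      (rdens_intervalIntegrable n p q),
      intervalIntegral.integral_add_adjacent_intervals (rdens_intervalIntegrable n a q)
      (rdens_intervalIntegrable n q b)]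
  have I1 : ∫ x in a..p, rdens n x = 1 * (p - a) := by
    apply integral_rdens_const n a p 1 hap
    intro x hx1 hx2
    have hxc : x < c := by
      rcases lt_max_iff.mp hx2 with h | h
      · linarith
      · exact lt_of_lt_of_le h (min_le_right _ _)
    unfold rdens
    rw [if_pos hxc]
  have I2 : ∫ x in p..q, rdens n x = (1/2) * (q - p) := by
    apply integral_rdens_const n p q (1/2) hpq
    intro x hx1 hx2
    have hxm : x < m := by
      rcases lt_max_iff.mp hx2 with h | h
      · exact absurd (hap.trans_lt hx1) (not_lt.mpr h.le)
      · exact lt_of_lt_of_le h (min_le_right _ _)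
    have hcx : c ≤ x := by
      rcases le_or_gt c b with hcb | hbc
      · have hcp : c ≤ p := by
          rw [hp, min_eq_right hcb]; exact le_max_right _ _
        linarith
      · -- b < c : then p = b, contradiction
        have hpb' : p = b := by
          rw [hp, min_eq_left hbc.le, max_eq_right hab]
        exact absurd (hx1.trans_le (hx2.le.trans hqb)) (by rw [hpb']; exact lt_irrefl b)
    unfold rdens
    rw [if_neg (not_lt.mpr hcx), if_pos hxm]
  have I3 : ∫ x in q..b, rdens n x = (3/2) * (b - q) := by
    apply integral_rdens_const n q b (3/2) hqb
    intro x hx1 hx2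
    have hmx : m ≤ x := by
      rcases le_or_gt m b with hmb | hbm
      · have : m ≤ q := le_max_of_le_right (le_min hmb le_rfl)
        linarith
      · have hqb' : q = b := by rw [hq, min_eq_left hbm.le, max_eq_right hab]
        exact absurd (hx1.trans hx2) (by rw [hqb']; exact lt_irrefl b)
    have hcx : c ≤ x := hcm.trans hmx
    unfold rdens
    rw [if_neg (not_lt.mpr hcx), if_neg (not_lt.mpr hmx)]
  rw [split, I1, I2, I3] at hval
  -- arithmetic case analysis
  rcases le_or_gt b m with hbm | hmb
  · -- q = b
    have hqb' : q = b := by rw [hq, min_eq_left hbm, max_eq_right hab]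
    rw [hqb'] at hval
    linarith
  · have hqmax : q = max a m := by rw [hq, min_eq_right hmb.le]
    rcases le_or_gt m a with hma | ham
    · -- a ≥ m : short interval, contradiction with hval
      have hq' : q = a := by rw [hqmax, max_eq_left hma]
      have hp' : p = a := le_antisymm (by
        rw [hp]; exact max_le le_rfl ((min_le_right _ _).trans (hcm.trans hma))) hap
      rw [hq', hp'] at hval
      have hba : b - a ≤ 1 / (2 * (n:ℝ)) := by
        have : m ≤ a := hma
        rw [hm] at this
        linarith
      linarith
    · have hq' : q = m := by rw [hqmax, max_eq_right ham.le]
      have hpmax : p = max a c := by rw [hp, min_eq_right (hcm.trans hmb.le)]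
      rcases le_or_gt c a with hca | hac
      · have hp' : p = a := by rw [hpmax, max_eq_left hca]
        rw [hq', hp'] at hval
        linarith [h2n]
      · have hp' : p = c := by rw [hpmax, max_eq_right hac.le]
        rw [hq', hp'] at hval
        linarith [h2n]
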